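/- arXiv:2211.02786 — 2 statements merged into one kernel-verified Lean document; each statement's English description precedes it below -/
import Mathlib

section
/- Let e ∈ ℝ³ be a unit vector (‖e‖ = 1) and θ ∈ ℝ. Then the matrix exponential of θ·ê satisfies Rodrigues' rotation formula: exp(θ · ê) = I + (sin θ) · ê + (1 − cos θ) · ê². -/
open Matrix

/-- The hat (skew-symmetric) matrix associated with a vector in ℝ³. -/
def hat (ω : Fin 3 → ℝ) : Matrix (Fin 3) (Fin 3) ℝ :=
  !![0, -ω 2, ω 1; ω 2, 0, -ω 0; -ω 1, ω 0, 0]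
open NormedSpace
lemma hat_cube (w : Fin 3 → ℝ) (h : w 0 ^ 2 + w 1 ^ 2 + w 2 ^ 2 = 1) :
    hat w ^ 3 = -hat w := by
  ext i j
  fin_cases i <;> fin_cases j <;>
    simp [hat, pow_succ, Matrix.mul_apply, Fin.sum_univ_three] <;>
    ring_nf <;>
    first
      | rfl
      | linear_combination w 0 * h | linear_combination (-(w 0)) * h
      | linear_combination w 1 * h | linear_combination (-(w 1)) * h
      | linear_combination w 2 * h | linear_combination (-(w 2)) * h

lemma rodrigues_aux (K : Matrix (Fin 3) (Fin 3) ℝ) (hK : K ^ 3 = -K) (θ : ℝ) :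
    exp (θ • K) = 1 + Real.sin θ • K + (1 - Real.cos θ) • K ^ 2 := by
  letI : NormedRing (Matrix (Fin 3) (Fin 3) ℝ) := Matrix.linftyOpNormedRing
  letI : NormedAlgebra ℝ (Matrix (Fin 3) (Fin 3) ℝ) := Matrix.linftyOpNormedAlgebra
  have hexp : ∀ t : ℝ, HasDerivAt (fun u : ℝ => exp (-(u • K)))
      (-(exp (-(t • K)) * K)) t := by
    intro t
    have h1 := hasDerivAt_exp_smul_const (𝕂 := ℝ) (-K) t
    simp [smul_neg, mul_neg] at h1; exact h1
  set f : ℝ → Matrix (Fin 3) (Fin 3) ℝ :=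
    fun t => 1 + Real.sin t • K + (1 - Real.cos t) • K ^ 2 with hf
  have hfd : ∀ t : ℝ, HasDerivAt f (Real.cos t • K + Real.sin t • K ^ 2) t := by
    intro t
    have h1 : HasDerivAt (fun u : ℝ => Real.sin u • K) (Real.cos t • K) t :=
      (Real.hasDerivAt_sin t).smul_const K
    have h2 : HasDerivAt (fun u : ℝ => (1 - Real.cos u) • K ^ 2) (Real.sin t • K ^ 2) t := by
      have := ((hasDerivAt_const t (1:ℝ)).sub (Real.hasDerivAt_cos t)).smul_const (K ^ 2)
      simp at this; exact this
    have := ((hasDerivAt_const t (1 : Matrix (Fin 3) (Fin 3) ℝ)).add h1).add h2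
    rw [zero_add] at this; exact this
  have hKf : ∀ t : ℝ, K * f t = Real.cos t • K + Real.sin t • K ^ 2 := by
    intro t
    have h3 : K * K ^ 2 = -K := by rw [← pow_succ']; exact hK
    simp only [hf, mul_add, mul_one, Matrix.mul_smul, ← pow_two, h3, smul_neg]
    module
  set g : ℝ → Matrix (Fin 3) (Fin 3) ℝ := fun t => exp (-(t • K)) * f t with hg
  have hgd : ∀ t : ℝ, HasDerivAt g 0 t := by
    intro t
    have h := (hexp t).mul (hfd t)
    rw [← hKf t] at h
    have e0 : -(exp (-(t • K)) * K) * f t + exp (-(t • K)) * (K * f t) = 0 := by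
      rw [neg_mul, mul_assoc]; exact neg_add_cancel _
    rw [e0] at h
    exact h
  have hconst : ∀ t : ℝ, g t = g 0 := fun t =>
    is_const_of_deriv_eq_zero (fun x => (hgd x).differentiableAt)
      (fun x => (hgd x).deriv) t 0
  have hg0 : g 0 = 1 := by simp [hg, hf]
  have hinv : exp (θ • K) * exp (-(θ • K)) = 1 := by
    rw [show -(θ • K) = (-θ) • K from (neg_smul θ K).symm,
      ← Matrix.exp_add_of_commute _ _ (((Commute.refl K).smul_left θ).smul_right (-θ))]
    simp
  calc exp (θ • K) = exp (θ • K) * g θ := by rw [hconst θ, hg0, mul_one]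
    _ = (exp (θ • K) * exp (-(θ • K))) * f θ := by rw [hg, mul_assoc]
    _ = f θ := by rw [hinv, one_mul]

theorem rodrigues_formula (e : EuclideanSpace ℝ (Fin 3)) (he : ‖e‖ = 1) (θ : ℝ) :
    NormedSpace.exp (θ • hat ((WithLp.equiv 2 (Fin 3 → ℝ)) e))
      = 1 + Real.sin θ • hat ((WithLp.equiv 2 (Fin 3 → ℝ)) e)
          + (1 - Real.cos θ) • hat ((WithLp.equiv 2 (Fin 3 → ℝ)) e) ^ 2 := by
  apply rodrigues_aux
  apply hat_cube
  have h2 : ‖e‖ ^ 2 = 1 := by rw [he]; norm_num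
  rw [EuclideanSpace.norm_eq] at h2
  rw [Real.sq_sqrt (by positivity)] at h2
  simpa [Fin.sum_univ_three, sq_abs] using h2
end

section
/- Let p_a : ℝ → ℝ³ be differentiable, let R_a, R_b : ℝ → M₃(ℝ) be differentiable with R_a(t) · R_a(t)ᵀ = I, det R_a(t) = 1, and R_b(t) · R_b(t)ᵀ = I for all t, and let q₁, q₂ ∈ ℝ³ be fixed vectors. Define p_b(t) = p_a(t) + R_a(t) · q₁ and p_e(t) = p_b(t) + R_a(t) · R_b(t) · q₂. Suppose ω_a, ω_b : ℝ → ℝ³ satisfy ω_a(t)^∧ = R_a′(t) · R_a(t)ᵀ and ω_b(t)^∧ = R_b′(t) · R_b(t)ᵀ for all t. Then the end-point linear velocity satisfies p_e′(t) = p_a′(t) + ω_a(t) × (p_e(t) − p_a(t)) + (R_a(t) · ω_b(t)) × (p_e(t) − p_b(t)) for all t ∈ ℝ. -/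
open Matrix

/-- The entrywise derivative of a matrix-valued function of a real variable. -/
noncomputable def matDeriv (R : ℝ → Matrix (Fin 3) (Fin 3) ℝ) (t : ℝ) :
    Matrix (Fin 3) (Fin 3) ℝ :=
  Matrix.of fun i j => deriv (fun s => R s i j) t

lemma hat_mulVec (ω v : Fin 3 → ℝ) : (hat ω).mulVec v = crossProduct ω v := by
  funext i
  fin_cases i <;>
    simp [hat, cross_apply, Matrix.mulVec, dotProduct, Fin.sum_univ_three] <;> ring

lemma rot_hat (A : Matrix (Fin 3) (Fin 3) ℝ) (horth : A * Aᵀ = 1) (hdet : A.det = 1)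
    (w : Fin 3 → ℝ) : A * hat w = hat (A.mulVec w) * A := by
  have hinv : A⁻¹ = Aᵀ := Matrix.inv_eq_right_inv horth
  have h1 : A * A.adjugate = 1 := by rw [Matrix.mul_adjugate, hdet, one_smul]
  have hadj : A.adjugate = Aᵀ := by rw [← Matrix.inv_eq_right_inv h1, hinv]
  have e : ∀ k l : Fin 3, A.adjugate k l = A l k := fun k l => by
    rw [hadj]; rfl
  have e00 := e 0 0; have e01 := e 0 1; have e02 := e 0 2
  have e10 := e 1 0; have e11 := e 1 1; have e12 := e 1 2
  have e20 := e 2 0; have e21 := e 2 1; have e22 := e 2 2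
  simp [adjugate_fin_three] at e00 e01 e02 e10 e11 e12 e20 e21 e22
  ext i j
  fin_cases i <;> fin_cases j <;>
    simp [Matrix.mul_apply, hat, Fin.sum_univ_three, Matrix.mulVec, dotProduct]
  · linear_combination w 1 * e20 - w 2 * e10
  · linear_combination -w 0 * e20 + w 2 * e00
  · linear_combination w 0 * e10 - w 1 * e00
  · linear_combination w 1 * e21 - w 2 * e11
  · linear_combination -w 0 * e21 + w 2 * e01
  · linear_combination w 0 * e11 - w 1 * e01
  · linear_combination w 1 * e22 - w 2 * e12
  · linear_combination -w 0 * e22 + w 2 * e02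
  · linear_combination w 0 * e12 - w 1 * e02

theorem multi_link_end_point_velocity
    (pa : ℝ → Fin 3 → ℝ) (hpa : Differentiable ℝ pa)
    (Ra Rb : ℝ → Matrix (Fin 3) (Fin 3) ℝ)
    (hRa : ∀ i j, Differentiable ℝ fun t => Ra t i j)
    (hRb : ∀ i j, Differentiable ℝ fun t => Rb t i j)
    (horthA : ∀ t : ℝ, Ra t * (Ra t)ᵀ = 1)
    (hdetA : ∀ t : ℝ, (Ra t).det = 1)
    (horthB : ∀ t : ℝ, Rb t * (Rb t)ᵀ = 1)
    (q₁ q₂ : Fin 3 → ℝ)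
    (ωa ωb : ℝ → Fin 3 → ℝ)
    (hωa : ∀ t : ℝ, hat (ωa t) = matDeriv Ra t * (Ra t)ᵀ)
    (hωb : ∀ t : ℝ, hat (ωb t) = matDeriv Rb t * (Rb t)ᵀ)
    (pb pe : ℝ → Fin 3 → ℝ)
    (hpb : ∀ t : ℝ, pb t = pa t + (Ra t).mulVec q₁)
    (hpe : ∀ t : ℝ, pe t = pb t + (Ra t * Rb t).mulVec q₂) (t : ℝ) :
    deriv pe t = deriv pa t + crossProduct (ωa t) (pe t - pa t)
        + crossProduct ((Ra t).mulVec (ωb t)) (pe t - pb t) := by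
  have hA' : ∀ i j, HasDerivAt (fun s => Ra s i j) (matDeriv Ra t i j) t := fun i j =>
    (hRa i j t).hasDerivAt
  have hB' : ∀ i j, HasDerivAt (fun s => Rb s i j) (matDeriv Rb t i j) t := fun i j =>
    (hRb i j t).hasDerivAt
  have key1 : HasDerivAt (fun s => (Ra s).mulVec q₁) ((matDeriv Ra t).mulVec q₁) t := by
    rw [hasDerivAt_pi]
    intro i
    simp only [Matrix.mulVec, dotProduct]
    exact HasDerivAt.fun_sum fun j _ => (hA' i j).mul_const (q₁ j)
  have key2 : HasDerivAt (fun s => (Ra s * Rb s).mulVec q₂)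
      ((matDeriv Ra t * Rb t + Ra t * matDeriv Rb t).mulVec q₂) t := by
    rw [hasDerivAt_pi]
    intro i
    have h := HasDerivAt.fun_sum (u := (Finset.univ : Finset (Fin 3)))
      (fun j _ => (HasDerivAt.fun_sum (u := (Finset.univ : Finset (Fin 3)))
        (fun k _ => (hA' i k).fun_mul (hB' k j))).mul_const (q₂ j))
    convert h using 1
    simp [Matrix.mulVec, dotProduct, Matrix.mul_apply, Matrix.add_apply,
      Finset.sum_add_distrib, add_mul]
    simp [Matrix.mulVec, dotProduct, Matrix.mul_apply, Matrix.add_apply,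
      Finset.sum_add_distrib, add_mul]
  have hpe' : pe = fun s => pa s + (Ra s).mulVec q₁ + (Ra s * Rb s).mulVec q₂ :=
    funext fun s => by rw [hpe s, hpb s, add_assoc]
  have hpeD : HasDerivAt pe (deriv pa t + (matDeriv Ra t).mulVec q₁
      + (matDeriv Ra t * Rb t + Ra t * matDeriv Rb t).mulVec q₂) t := by
    rw [hpe']
    exact ((hpa t).hasDerivAt.add key1).add key2
  rw [hpeD.deriv]
  have hAo : (Ra t)ᵀ * Ra t = 1 := mul_eq_one_comm.mp (horthA t)
  have hBo : (Rb t)ᵀ * Rb t = 1 := mul_eq_one_comm.mp (horthB t)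
  have hA'eq : matDeriv Ra t = hat (ωa t) * Ra t := by
    calc matDeriv Ra t = matDeriv Ra t * ((Ra t)ᵀ * Ra t) := by rw [hAo, mul_one]
    _ = hat (ωa t) * Ra t := by rw [← mul_assoc, ← hωa t]
  have hB'eq : matDeriv Rb t = hat (ωb t) * Rb t := by
    calc matDeriv Rb t = matDeriv Rb t * ((Rb t)ᵀ * Rb t) := by rw [hBo, mul_one]
    _ = hat (ωb t) * Rb t := by rw [← mul_assoc, ← hωb t]
  have hconj : Ra t * hat (ωb t) = hat ((Ra t).mulVec (ωb t)) * Ra t :=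
    rot_hat _ (horthA t) (hdetA t) _
  have h1 : pe t - pa t = (Ra t).mulVec q₁ + (Ra t * Rb t).mulVec q₂ := by
    rw [hpe t, hpb t]; abel
  have h2 : pe t - pb t = (Ra t * Rb t).mulVec q₂ := by
    rw [hpe t]; abel
  rw [h1, h2, ← hat_mulVec, ← hat_mulVec, hA'eq, hB'eq]
  rw [show hat (ωa t) * Ra t * Rb t + Ra t * (hat (ωb t) * Rb t)
      = hat (ωa t) * (Ra t * Rb t) + hat ((Ra t).mulVec (ωb t)) * (Ra t * Rb t) by
    rw [← mul_assoc, ← mul_assoc, hconj, mul_assoc, mul_assoc]]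
  simp only [Matrix.add_mulVec, ← Matrix.mulVec_mulVec, Matrix.mulVec_add]
  abel
end
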